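/- Let m ≥ 2 and let {S_n}_{n=0}^{m-2} ⊆ B(H) be positive, invertible, pairwise commuting operators. If {S_n}_{n=m-1}^∞ and {S'_n}_{n=m-1}^∞ are two sequences of positive, pairwise commuting, invertible operators, each extending {S_n}_{n=0}^{m-2} to a uniformly bounded weight sequence whose associated unilateral operator valued weighted shift is an m-isometry (and such that in each case the full weight sequence consists of positive pairwise commuting operators), then S_n = S'_n for every n ≥ m-1. -/

import Mathlib

open ContinuousLinearMap MeasureTheory
open scoped InnerProductSpace
set_option linter.unusedSectionVars false
set_option linter.unusedVariables false

noncomputable section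

variable {H : Type*} [NormedAddCommGroup H] [InnerProductSpace ℂ H] [CompleteSpace H]

/-- `T^{[k]} = (T*)^k T^k`. -/
def opBr (T : H →L[ℂ] H) (k : ℕ) : H →L[ℂ] H :=
  ((ContinuousLinearMap.adjoint T) ^ k).comp (T ^ k)

/-- `T` is an `m`-isometry: `∑_{p=0}^m (-1)^p (m choose p) T^{[p]} = 0`. -/
def IsMIsometry (T : H →L[ℂ] H) (m : ℕ) : Prop :=
  ∑ p ∈ Finset.range (m + 1), ((-1 : ℂ) ^ p * (m.choose p : ℂ)) • opBr T p = 0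

/-- `T` satisfies the `k`-kernel condition: `Ker T*` is invariant under `T^{[n]}`
for every `n ∈ {1, …, k}`. -/
def KernelCondition (T : H →L[ℂ] H) (k : ℕ) : Prop :=
  ∀ n, 1 ≤ n → n ≤ k →
    ∀ x ∈ LinearMap.ker (ContinuousLinearMap.adjoint T).toLinearMap,
      opBr T n x ∈ LinearMap.ker (ContinuousLinearMap.adjoint T).toLinearMap

/-- `Sh` is the unilateral operator valued weighted shift on `ℓ²(K)` with weights `S n`, i.e.
`Sh e_n(f) = e_{n+1}(S_n f)`. -/
def IsWeightedShiftOf {K : Type*} [NormedAddCommGroup K] [InnerProductSpace ℂ K]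
    (Sh : lp (fun _ : ℕ => K) 2 →L[ℂ] lp (fun _ : ℕ => K) 2) (S : ℕ → K →L[ℂ] K) : Prop :=
  ∀ (n : ℕ) (f : K), Sh (lp.single 2 n f) = lp.single 2 (n + 1) (S n f)

/-- `shiftProd S n p = S (n+p-1) * ⋯ * S (n+1) * S n`. -/
def shiftProd (S : ℕ → H →L[ℂ] H) (n : ℕ) : ℕ → (H →L[ℂ] H)
  | 0 => 1
  | p + 1 => S (n + p) * shiftProd S n p

lemma commute_shiftProd (S : ℕ → H →L[ℂ] H)
    (hcomm : ∀ i j, S i * S j = S j * S i) (k n p : ℕ) :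
    Commute (S k) (shiftProd S n p) := by
  induction p with
  | zero => exact Commute.one_right _
  | succ p ih => exact Commute.mul_right (hcomm k (n + p) : Commute (S k) (S (n + p))) ih

lemma isUnit_shiftProd (S : ℕ → H →L[ℂ] H) (hinv : ∀ n, IsUnit (S n)) (n p : ℕ) :
    IsUnit (shiftProd S n p) := by
  induction p with
  | zero => exact isUnit_one
  | succ p ih => exact (hinv (n + p)).mul ih

lemma adjoint_shiftProd (S : ℕ → H →L[ℂ] H) (hsa : ∀ k, IsSelfAdjoint (S k))
    (hcomm : ∀ i j, S i * S j = S j * S i) (n p : ℕ) :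
    ContinuousLinearMap.adjoint (shiftProd S n p) = shiftProd S n p := by
  induction p with
  | zero =>
      rw [← ContinuousLinearMap.star_eq_adjoint]
      exact star_one _
  | succ p ih =>
      rw [← ContinuousLinearMap.star_eq_adjoint] at ih ⊢
      show star (S (n + p) * shiftProd S n p) = shiftProd S (n := n) (p + 1)
      rw [star_mul, ih, (hsa (n + p)).star_eq]
      exact ((commute_shiftProd S hcomm (n + p) n p).symm).eq

lemma shiftProd_sq_succ (S : ℕ → H →L[ℂ] H)
    (hcomm : ∀ i j, S i * S j = S j * S i) (n p : ℕ) :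
    shiftProd S n (p + 1) * shiftProd S n (p + 1)
      = (S (n + p) * S (n + p)) * (shiftProd S n p * shiftProd S n p) := by
  show (S (n + p) * shiftProd S n p) * (S (n + p) * shiftProd S n p) = _
  exact (commute_shiftProd S hcomm (n + p) n p).symm.mul_mul_mul_comm _ _

lemma pow_single {Sh : lp (fun _ : ℕ => H) 2 →L[ℂ] lp (fun _ : ℕ => H) 2}
    {S : ℕ → H →L[ℂ] H} (hSh : IsWeightedShiftOf Sh S) (n p : ℕ) (f : H) :
    (Sh ^ p) (lp.single 2 n f) = lp.single 2 (n + p) (shiftProd S n p f) := by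
  induction p with
  | zero => simp [shiftProd]
  | succ p ih =>
      rw [pow_succ', ContinuousLinearMap.mul_apply, ih, hSh]
      rfl

lemma inner_opBr {Sh : lp (fun _ : ℕ => H) 2 →L[ℂ] lp (fun _ : ℕ => H) 2}
    {S : ℕ → H →L[ℂ] H} (hSh : IsWeightedShiftOf Sh S) (n p : ℕ) (f g : H) :
    ⟪lp.single 2 n g, opBr Sh p (lp.single 2 n f)⟫_ℂ
      = ⟪shiftProd S n p g, shiftProd S n p f⟫_ℂ := by
  have hadj : (ContinuousLinearMap.adjoint Sh) ^ p = ContinuousLinearMap.adjoint (Sh ^ p) := by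
    rw [← ContinuousLinearMap.star_eq_adjoint, ← ContinuousLinearMap.star_eq_adjoint, star_pow]
  rw [opBr, ContinuousLinearMap.comp_apply, hadj, ContinuousLinearMap.adjoint_inner_right,
    pow_single hSh, pow_single hSh, lp.inner_single_left, lp.single_apply_self]

lemma key_eq {Sh : lp (fun _ : ℕ => H) 2 →L[ℂ] lp (fun _ : ℕ => H) 2}
    {S : ℕ → H →L[ℂ] H} {m : ℕ} (hSh : IsWeightedShiftOf Sh S)
    (hiso : IsMIsometry Sh m) (n : ℕ) :
    ∑ p ∈ Finset.range (m + 1), ((-1 : ℂ) ^ p * (m.choose p : ℂ)) •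
      (ContinuousLinearMap.adjoint (shiftProd S n p) * shiftProd S n p) = 0 := by
  have h0 : ∀ f g : H, ∑ p ∈ Finset.range (m + 1), ((-1 : ℂ) ^ p * (m.choose p : ℂ)) *
      ⟪shiftProd S n p g, shiftProd S n p f⟫_ℂ = 0 := by
    intro f g
    have := congrArg (fun T : lp (fun _ : ℕ => H) 2 →L[ℂ] lp (fun _ : ℕ => H) 2 =>
      ⟪lp.single 2 n g, T (lp.single 2 n f)⟫_ℂ) hiso
    simpa [ContinuousLinearMap.sum_apply, ContinuousLinearMap.smul_apply, inner_sum,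
      inner_smul_right, inner_opBr hSh] using this
  refine ContinuousLinearMap.ext fun f => ?_
  rw [ContinuousLinearMap.zero_apply]
  have hfg : ∀ g : H, ⟪g, (∑ p ∈ Finset.range (m + 1), ((-1 : ℂ) ^ p * (m.choose p : ℂ)) •
      (ContinuousLinearMap.adjoint (shiftProd S n p) * shiftProd S n p)) f⟫_ℂ = 0 := by
    intro g
    simpa [ContinuousLinearMap.sum_apply, ContinuousLinearMap.smul_apply,
      ContinuousLinearMap.mul_apply, inner_sum, inner_smul_right,
      ContinuousLinearMap.adjoint_inner_right] using h0 f g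
  exact inner_self_eq_zero.mp (hfg _)

set_option synthInstance.maxHeartbeats 1000000 in
set_option maxHeartbeats 1000000 in
lemma sq_eq_of_pos {a b : H →L[ℂ] H} (ha : a.IsPositive) (hb : b.IsPositive)
    (h : a * a = b * b) : a = b := by
  have ha' : 0 ≤ a := (ContinuousLinearMap.nonneg_iff_isPositive a).2 ha
  have hb' : 0 ≤ b := (ContinuousLinearMap.nonneg_iff_isPositive b).2 hb
  calc a = CFC.sqrt (a * a) := (CFC.sqrt_unique rfl ha').symm
  _ = CFC.sqrt (b * b) := by rw [h]
  _ = b := CFC.sqrt_unique rfl hb'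

/-- Proposition 3.6. For `m ≥ 2`, the solution to the `m`-isometric
completion problem for positive, invertible, pairwise commuting initial weights
`{S_n}_{n=0}^{m-2}` is unique in the class of unilateral operator valued weighted shifts with
positive pairwise commuting weights. -/
theorem mIsometric_completion_unique (m : ℕ) (hm : 2 ≤ m) (S S' : ℕ → H →L[ℂ] H)
    (hagree : ∀ n, n ≤ m - 2 → S n = S' n)
    (hpos : ∀ n, (S n).IsPositive) (hpos' : ∀ n, (S' n).IsPositive)
    (hinv : ∀ n, IsUnit (S n)) (hinv' : ∀ n, IsUnit (S' n))
    (hcomm : ∀ i j, (S i).comp (S j) = (S j).comp (S i))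
    (hcomm' : ∀ i j, (S' i).comp (S' j) = (S' j).comp (S' i))
    (hbdd : ∃ M : ℝ, ∀ n, ‖S n‖ ≤ M) (hbdd' : ∃ M : ℝ, ∀ n, ‖S' n‖ ≤ M)
    (Sh Sh' : lp (fun _ : ℕ => H) 2 →L[ℂ] lp (fun _ : ℕ => H) 2)
    (hSh : IsWeightedShiftOf Sh S) (hSh' : IsWeightedShiftOf Sh' S')
    (hiso : IsMIsometry Sh m) (hiso' : IsMIsometry Sh' m) :
    ∀ n, S n = S' n := by
  have hcm : ∀ i j, S i * S j = S j * S i := fun i j => by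
    rw [ContinuousLinearMap.mul_def, ContinuousLinearMap.mul_def]; exact hcomm i j
  have hcm' : ∀ i j, S' i * S' j = S' j * S' i := fun i j => by
    rw [ContinuousLinearMap.mul_def, ContinuousLinearMap.mul_def]; exact hcomm' i j
  have hsa : ∀ k, IsSelfAdjoint (S k) := fun k => (hpos k).isSelfAdjoint
  have hsa' : ∀ k, IsSelfAdjoint (S' k) := fun k => (hpos' k).isSelfAdjoint
  have heq : ∀ n, ∑ p ∈ Finset.range (m + 1), ((-1 : ℂ) ^ p * (m.choose p : ℂ)) •
      (shiftProd S n p * shiftProd S n p) = 0 := by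
    intro n
    have h := key_eq hSh hiso n
    have ha : ∀ p, ContinuousLinearMap.adjoint (shiftProd S n p) = shiftProd S n p :=
      adjoint_shiftProd S hsa hcm n
    simpa only [ha] using h
  have heq' : ∀ n, ∑ p ∈ Finset.range (m + 1), ((-1 : ℂ) ^ p * (m.choose p : ℂ)) •
      (shiftProd S' n p * shiftProd S' n p) = 0 := by
    intro n
    have h := key_eq hSh' hiso' n
    have ha : ∀ p, ContinuousLinearMap.adjoint (shiftProd S' n p) = shiftProd S' n p :=
      adjoint_shiftProd S' hsa' hcm' n
    simpa only [ha] using h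
  obtain ⟨M, rfl⟩ : ∃ M, m = M + 2 := ⟨m - 2, by omega⟩
  have hsq : ∀ n, S n * S n = S' n * S' n := by
    intro n
    induction n using Nat.strong_induction_on with
    | _ n ih =>
      by_cases hn : n ≤ M
      · rw [hagree n (by omega)]
      · set k := n - (M + 1) with hkdef
        have hkn : n = k + (M + 1) := by omega
        have hW : ∀ p, p ≤ M + 1 →
            shiftProd S k p * shiftProd S k p = shiftProd S' k p * shiftProd S' k p := by
          intro p hp
          induction p with
          | zero => simp [shiftProd]
          | succ p ihp =>
              rw [shiftProd_sq_succ S hcm, shiftProd_sq_succ S' hcm',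
                ihp (by omega), ih (k + p) (by omega)]
        have h1 := heq k
        have h2 := heq' k
        rw [Finset.sum_range_succ] at h1 h2
        have hA : ∑ p ∈ Finset.range (M + 2), ((-1 : ℂ) ^ p * ((M + 2).choose p : ℂ)) •
            (shiftProd S k p * shiftProd S k p)
            = ∑ p ∈ Finset.range (M + 2), ((-1 : ℂ) ^ p * ((M + 2).choose p : ℂ)) •
            (shiftProd S' k p * shiftProd S' k p) := by
          refine Finset.sum_congr rfl fun p hp => ?_
          rw [hW p (by simpa using Nat.lt_succ_iff.mp (Finset.mem_range.mp hp))]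
        have hc : ((-1 : ℂ) ^ (M + 2) * (((M + 2).choose (M + 2)) : ℂ)) ≠ 0 := by
          simp [Nat.choose_self]
        have hX : shiftProd S k (M + 2) * shiftProd S k (M + 2)
            = shiftProd S' k (M + 2) * shiftProd S' k (M + 2) := by
          have h3 : ((-1 : ℂ) ^ (M + 2) * (((M + 2).choose (M + 2)) : ℂ)) •
              (shiftProd S k (M + 2) * shiftProd S k (M + 2))
              = ((-1 : ℂ) ^ (M + 2) * (((M + 2).choose (M + 2)) : ℂ)) •
              (shiftProd S' k (M + 2) * shiftProd S' k (M + 2)) := by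
            have := h1
            rw [hA] at this
            linear_combination (norm := module) this - h2
          exact smul_right_injective _ hc h3
        rw [shiftProd_sq_succ S hcm, shiftProd_sq_succ S' hcm',
          hW (M + 1) le_rfl] at hX
        have hQ : IsUnit (shiftProd S' k (M + 1) * shiftProd S' k (M + 1)) :=
          (isUnit_shiftProd S' hinv' k (M + 1)).mul (isUnit_shiftProd S' hinv' k (M + 1))
        have := hQ.mul_right_cancel hX
        rwa [show k + (M + 1) = n by omega] at this
  exact fun n => sq_eq_of_pos (hpos n) (hpos' n) (hsq n)
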